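/- Let Λ: ℍ → ℂ be an ℝ-linear map determined by (z₂,z₃,z₄,z₅) ∈ ℂ⁴ via Λ(b+cj) = z₂c − z₃b + z₄·conj(b) + z₅·conj(c), with real 2×4 matrix L_Λ (for ℍ ≅ ℝ⁴, ℂ ≅ ℝ²). Then det(L_Λ · L_Λᵀ) = ν(Λ)² − 4|Δ(Λ)|², where ν(Λ) = |z₂|²+|z₃|²+|z₄|²+|z₅|² and Δ(Λ) = z₃z₄ − z₂z₅. In particular, for Λ ≠ 0, the real rank of Λ is 1 if and only if ν(Λ) = 2|Δ(Λ)| > 0. -/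

import Mathlib

/-- The real 2×4 matrix of Λ (for ℍ ≅ ℝ⁴, ℂ ≅ ℝ²), where
Λ(x+yi+uj+vk) = (−z₃+z₄)x − i(z₃+z₄)y + (z₂+z₅)u + i(z₂−z₅)v. -/
noncomputable def Lmat (z2 z3 z4 z5 : ℂ) : Matrix (Fin 2) (Fin 4) ℝ :=
  !![(-z3 + z4).re, (-Complex.I * (z3 + z4)).re, (z2 + z5).re, (Complex.I * (z2 - z5)).re;
     (-z3 + z4).im, (-Complex.I * (z3 + z4)).im, (z2 + z5).im, (Complex.I * (z2 - z5)).im]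

lemma det_aux (a b c d e f g h : ℝ) :
    ((!![-c+e, d+f, a+g, -b+h; -d+f, -c-e, b+h, a-g] : Matrix (Fin 2) (Fin 4) ℝ)
      * (!![-c+e, d+f, a+g, -b+h; -d+f, -c-e, b+h, a-g] : Matrix (Fin 2) (Fin 4) ℝ).transpose).det
      = (a^2+b^2+c^2+d^2+e^2+f^2+g^2+h^2)^2
        - 4*((c*e-d*f-(a*g-b*h))^2 + (c*f+d*e-(a*h+b*g))^2) := by
  set M : Matrix (Fin 2) (Fin 4) ℝ := !![-c+e, d+f, a+g, -b+h; -d+f, -c-e, b+h, a-g] with hM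
  have e00 : (M * M.transpose) 0 0 = (-c+e)^2 + (d+f)^2 + (a+g)^2 + (-b+h)^2 := by
    simp only [Matrix.mul_apply, Matrix.transpose_apply, Fin.sum_univ_four]; simp [hM]; try ring
  have e01 : (M * M.transpose) 0 1 = (-c+e)*(-d+f) + (d+f)*(-c-e) + (a+g)*(b+h) + (-b+h)*(a-g) := by
    simp only [Matrix.mul_apply, Matrix.transpose_apply, Fin.sum_univ_four]; simp [hM]; try ring
  have e10 : (M * M.transpose) 1 0 = (-c+e)*(-d+f) + (d+f)*(-c-e) + (a+g)*(b+h) + (-b+h)*(a-g) := by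
    simp only [Matrix.mul_apply, Matrix.transpose_apply, Fin.sum_univ_four]; simp [hM]; try ring
  have e11 : (M * M.transpose) 1 1 = (-d+f)^2 + (-c-e)^2 + (b+h)^2 + (a-g)^2 := by
    simp only [Matrix.mul_apply, Matrix.transpose_apply, Fin.sum_univ_four]; simp [hM]; try ring
  rw [Matrix.det_fin_two, e00, e01, e10, e11]
  ring

lemma Lmat_eq (z2 z3 z4 z5 : ℂ) :
    Lmat z2 z3 z4 z5
      = !![-z3.re+z4.re, z3.im+z4.im, z2.re+z5.re, -z2.im+z5.im;
           -z3.im+z4.im, -z3.re-z4.re, z2.im+z5.im, z2.re-z5.re] := by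
  ext i j
  fin_cases i <;> fin_cases j <;>
    simp [Lmat, Complex.mul_re, Complex.mul_im] <;> ring

lemma aux_rank_pos {m n : Type*} [Fintype m] [Fintype n] [DecidableEq n]
    (M : Matrix m n ℝ) (h : M ≠ 0) : 0 < M.rank := by
  rcases Nat.eq_zero_or_pos M.rank with h0 | h0
  · exfalso
    apply h
    have hb : LinearMap.range M.mulVecLin = ⊥ := by
      rw [← Submodule.finrank_eq_zero (R := ℝ)]
      exact h0
    have hz : M.mulVecLin = 0 := LinearMap.range_eq_bot.mp hb
    ext i j
    have := congrFun (congrArg (fun f => f (Pi.single j (1:ℝ))) (congrArg DFunLike.coe hz)) i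
    simpa [Matrix.mulVecLin, Matrix.mulVec_single] using this
  · exact h0

lemma aux_rank_one_iff (M : Matrix (Fin 2) (Fin 4) ℝ) (h : M ≠ 0) :
    M.rank = 1 ↔ (M * M.transpose).det = 0 := by
  have hrk : (M * M.transpose).rank = M.rank := Matrix.rank_self_mul_transpose M
  constructor
  · intro h1
    by_contra hd
    have hu : IsUnit (M * M.transpose) := (Matrix.isUnit_iff_isUnit_det _).mpr (Ne.isUnit hd)
    have := Matrix.rank_of_isUnit _ hu
    rw [hrk, h1] at this
    simp at this
  · intro hd
    have hpos : 0 < M.rank := aux_rank_pos M h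
    obtain ⟨v, hv, hvz⟩ := Matrix.exists_mulVec_eq_zero_iff.mpr hd
    have hker : v ∈ LinearMap.ker (M * M.transpose).mulVecLin := by
      exact LinearMap.mem_ker.mpr hvz
    have hkpos : 0 < Module.finrank ℝ (LinearMap.ker (M * M.transpose).mulVecLin) := by
      rw [Module.finrank_pos_iff_exists_ne_zero (R := ℝ)]
      exact ⟨⟨v, hker⟩, by simpa [Subtype.ext_iff] using hv⟩
    have hrn := LinearMap.finrank_range_add_finrank_ker (M * M.transpose).mulVecLin
    have hdim : Module.finrank ℝ (Fin 2 → ℝ) = 2 := by simp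
    rw [hdim] at hrn
    have hle : (M * M.transpose).rank ≤ 1 := by
      have : (M * M.transpose).rank
          + Module.finrank ℝ (LinearMap.ker (M * M.transpose).mulVecLin) = 2 := hrn
      omega
    omega

/-- det(L_Λ L_Λᵀ) = ν(Λ)² − 4|Δ(Λ)|², and for Λ ≠ 0 the real rank of Λ is 1
iff ν(Λ) = 2|Δ(Λ)| > 0, where ν = Σ|zᵢ|² and Δ = z₃z₄ − z₂z₅. -/
theorem stmt15 (z2 z3 z4 z5 : ℂ) :
    (Lmat z2 z3 z4 z5 * (Lmat z2 z3 z4 z5).transpose).det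
      = (Complex.normSq z2 + Complex.normSq z3 + Complex.normSq z4
          + Complex.normSq z5) ^ 2
        - 4 * Complex.normSq (z3 * z4 - z2 * z5) ∧
    ((z2, z3, z4, z5) ≠ (0, 0, 0, 0) →
      ((Lmat z2 z3 z4 z5).rank = 1 ↔
        (Complex.normSq z2 + Complex.normSq z3 + Complex.normSq z4
            + Complex.normSq z5
          = 2 * ‖z3 * z4 - z2 * z5‖ ∧
        0 < ‖z3 * z4 - z2 * z5‖))) := by
  have hdet : (Lmat z2 z3 z4 z5 * (Lmat z2 z3 z4 z5).transpose).det
      = (Complex.normSq z2 + Complex.normSq z3 + Complex.normSq z4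
          + Complex.normSq z5) ^ 2
        - 4 * Complex.normSq (z3 * z4 - z2 * z5) := by
    rw [Lmat_eq, det_aux z2.re z2.im z3.re z3.im z4.re z4.im z5.re z5.im]
    simp only [Complex.normSq_apply, Complex.mul_re, Complex.mul_im,
      Complex.sub_re, Complex.sub_im]
    ring
  refine ⟨hdet, fun hz => ?_⟩
  have hM : Lmat z2 z3 z4 z5 ≠ 0 := by
    intro h0
    apply hz
    rw [Lmat_eq] at h0
    have e00 : -z3.re + z4.re = 0 := by simpa using congrFun (congrFun h0 0) 0
    have e01 : z3.im + z4.im = 0 := by simpa using congrFun (congrFun h0 0) 1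
    have e02 : z2.re + z5.re = 0 := by simpa using congrFun (congrFun h0 0) 2
    have e03 : -z2.im + z5.im = 0 := by simpa using congrFun (congrFun h0 0) 3
    have e10 : -z3.im + z4.im = 0 := by simpa using congrFun (congrFun h0 1) 0
    have e11 : -z3.re - z4.re = 0 := by simpa using congrFun (congrFun h0 1) 1
    have e12 : z2.im + z5.im = 0 := by simpa using congrFun (congrFun h0 1) 2
    have e13 : z2.re - z5.re = 0 := by simpa using congrFun (congrFun h0 1) 3
    have hz2 : z2 = 0 := Complex.ext (by simp; linarith) (by simp; linarith)
    have hz3 : z3 = 0 := Complex.ext (by simp; linarith) (by simp; linarith)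
    have hz4 : z4 = 0 := Complex.ext (by simp; linarith) (by simp; linarith)
    have hz5 : z5 = 0 := Complex.ext (by simp; linarith) (by simp; linarith)
    simp [hz2, hz3, hz4, hz5]
  rw [aux_rank_one_iff _ hM, hdet]
  set ν := Complex.normSq z2 + Complex.normSq z3 + Complex.normSq z4 + Complex.normSq z5 with hν
  set d := ‖z3 * z4 - z2 * z5‖ with hd
  have hsq : Complex.normSq (z3 * z4 - z2 * z5) = d ^ 2 := (Complex.sq_norm _).symm
  have hνpos : 0 < ν := by
    have hnz : ¬(z2 = 0 ∧ z3 = 0 ∧ z4 = 0 ∧ z5 = 0) := by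
      intro ⟨a, b, c, dd⟩; exact hz (by simp [a, b, c, dd])
    by_contra hh
    push_neg at hh
    have n2 := Complex.normSq_nonneg z2
    have n3 := Complex.normSq_nonneg z3
    have n4 := Complex.normSq_nonneg z4
    have n5 := Complex.normSq_nonneg z5
    have hνle : Complex.normSq z2 + Complex.normSq z3 + Complex.normSq z4
        + Complex.normSq z5 ≤ 0 := hν ▸ hh
    exact hnz ⟨Complex.normSq_eq_zero.mp (le_antisymm (by linarith) n2),
      Complex.normSq_eq_zero.mp (le_antisymm (by linarith) n3),
      Complex.normSq_eq_zero.mp (le_antisymm (by linarith) n4),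
      Complex.normSq_eq_zero.mp (le_antisymm (by linarith) n5)⟩
  have hdnn : 0 ≤ d := norm_nonneg _
  rw [hsq]
  constructor
  · intro h0
    have hfac : (ν - 2 * d) * (ν + 2 * d) = 0 := by nlinarith
    have hne : ν + 2 * d > 0 := by linarith
    have hνd : ν = 2 * d := by
      rcases mul_eq_zero.mp hfac with h | h
      · linarith
      · linarith
    exact ⟨hνd, by linarith⟩
  · rintro ⟨h1, _⟩
    nlinarith
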